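/- Let C be a nonempty closed convex subset of a real Hilbert space H, let ω > 0, and define h : H → ℝ by h = ω d_C − ln(1 + ω d_C). Then h is convex and Fréchet differentiable with an ω²-Lipschitzian gradient; for every x ∈ H, ∇h(x) = (ω²/(1 + ω d_C(x))) (x − proj_C x) if x ∉ C and ∇h(x) = 0 if x ∈ C; and for every γ > 0 and every x ∈ H, prox_{γh} x = proj_C x + ((γω² + 1 − ω d_C(x) − √(|ω d_C(x) − γω² − 1|² + 4 ω d_C(x)))/(2 ω d_C(x))) (proj_C x − x) if x ∉ C, while prox_{γh} x = x if x ∈ C. -/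

import Mathlib

set_option maxHeartbeats 1000000

open Metric RealInnerProductSpace

section Aux
variable {H : Type*} [NormedAddCommGroup H] [InnerProductSpace ℝ H]
variable {C : Set H}

/-- distance to C equals distance to a point satisfying the variational inequality -/
lemma stmt10_dist_eq {z q : H} (hq : q ∈ C)
    (hvar : ∀ c ∈ C, ⟪z - q, c - q⟫ ≤ 0) :
    Metric.infDist z C = ‖z - q‖ := by
  refine le_antisymm ?_ ?_
  · simpa [dist_eq_norm] using Metric.infDist_le_dist_of_mem hq
  · by_contra hlt
    push_neg at hlt
    obtain ⟨c, hc, hdc⟩ := (Metric.infDist_lt_iff ⟨q, hq⟩).1 hlt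
    have h1 : z - c = (z - q) - (c - q) := by abel
    have h2 : ‖(z - q) - (c - q)‖ ^ 2
        = ‖z - q‖ ^ 2 - 2 * ⟪z - q, c - q⟫ + ‖c - q‖ ^ 2 := by
      rw [norm_sub_sq_real]
    have key : ‖z - q‖ ^ 2 ≤ ‖z - c‖ ^ 2 := by
      nlinarith [hvar c hc, sq_nonneg ‖c - q‖, h1 ▸ h2]
    rw [dist_eq_norm] at hdc
    nlinarith [norm_nonneg (z - q), norm_nonneg (z - c)]

lemma stmt10_infDist_proj (projC : H → H)
    (hproj : ∀ x, projC x ∈ C ∧ ∀ y ∈ C, dist x (projC x) ≤ dist x y) (x : H) :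
    Metric.infDist x C = ‖x - projC x‖ := by
  refine le_antisymm ?_ ?_
  · simpa [dist_eq_norm] using Metric.infDist_le_dist_of_mem (hproj x).1
  · by_contra hlt
    push_neg at hlt
    obtain ⟨c, hc, hdc⟩ := (Metric.infDist_lt_iff ⟨projC x, (hproj x).1⟩).1 hlt
    have := (hproj x).2 c hc
    simp only [dist_eq_norm] at hdc this
    linarith

/-- subgradient inequality for h at a point z whose projection is q -/
lemma stmt10_subgrad {ω : ℝ} (hω : 0 < ω) {h : H → ℝ}
    (hdef : ∀ x, h x = ω * Metric.infDist x C - Real.log (1 + ω * Metric.infDist x C))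
    (projC : H → H)
    (hproj : ∀ x, projC x ∈ C ∧ ∀ y ∈ C, dist x (projC x) ≤ dist x y)
    {z q : H} (hq : q ∈ C) (hvar : ∀ c ∈ C, ⟪z - q, c - q⟫ ≤ 0) (y : H) :
    h z + ⟪(ω ^ 2 / (1 + ω * ‖z - q‖)) • (z - q), y - z⟫ ≤ h y := by
  set dz := ‖z - q‖ with hdzdef
  set dy := ‖y - projC y‖ with hdydef
  have hdz : Metric.infDist z C = dz := stmt10_dist_eq hq hvar
  have hdy : Metric.infDist y C = dy := stmt10_infDist_proj projC hproj y
  have hdz0 : 0 ≤ dz := norm_nonneg _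
  have hdy0 : 0 ≤ dy := norm_nonneg _
  have h1z : 0 < 1 + ω * dz := by nlinarith
  have h1y : 0 < 1 + ω * dy := by nlinarith
  -- inner product bound
  have hip : ⟪z - q, y - z⟫ ≤ dz * (dy - dz) := by
    have e1 : y - z = (y - projC y) + ((projC y - q) - (z - q)) := by abel
    have e2 : ⟪z - q, y - z⟫
        = ⟪z - q, y - projC y⟫ + (⟪z - q, projC y - q⟫ - ⟪z - q, z - q⟫) := by
      rw [e1, inner_add_right, inner_sub_right, inner_sub_right]
    have b1 : ⟪z - q, y - projC y⟫ ≤ dz * dy := real_inner_le_norm _ _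
    have b2 : ⟪z - q, projC y - q⟫ ≤ 0 := hvar (projC y) (hproj y).1
    have b3 : ⟪z - q, z - q⟫ = dz ^ 2 := real_inner_self_eq_norm_sq _
    rw [e2, b3]; nlinarith
  have hsmul : ⟪(ω ^ 2 / (1 + ω * dz)) • (z - q), y - z⟫
      = (ω ^ 2 / (1 + ω * dz)) * ⟪z - q, y - z⟫ := real_inner_smul_left _ _ _
  have hκ : 0 ≤ ω ^ 2 / (1 + ω * dz) := by positivity
  have hb : ⟪(ω ^ 2 / (1 + ω * dz)) • (z - q), y - z⟫
      ≤ ω ^ 2 / (1 + ω * dz) * (dz * (dy - dz)) := by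
    rw [hsmul]; exact mul_le_mul_of_nonneg_left hip hκ
  -- scalar inequality
  set u : ℝ := (1 + ω * dy) / (1 + ω * dz) with hudef
  have hu : 0 < u := div_pos h1y h1z
  have hlog : Real.log u = Real.log (1 + ω * dy) - Real.log (1 + ω * dz) :=
    Real.log_div (ne_of_gt h1y) (ne_of_gt h1z)
  have hkey : Real.log u ≤ u - 1 := Real.log_le_sub_one_of_pos hu
  have hid : ω * (dy - dz) = (u - 1) + ω ^ 2 / (1 + ω * dz) * (dz * (dy - dz)) := by
    rw [hudef]; field_simp; ring
  rw [hdef y, hdef z, hdy, hdz]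
  linarith [hb]
end Aux

section Aux2
variable {H : Type*} [NormedAddCommGroup H] [InnerProductSpace ℝ H]
variable {C : Set H}

lemma stmt10_var (hCconv : Convex ℝ C) (projC : H → H)
    (hproj : ∀ x, projC x ∈ C ∧ ∀ y ∈ C, dist x (projC x) ≤ dist x y) (x : H) :
    ∀ c ∈ C, ⟪x - projC x, c - projC x⟫ ≤ 0 := by
  have hmem := (hproj x).1
  refine (norm_eq_iInf_iff_real_inner_le_zero hCconv hmem).1 ?_
  haveI : Nonempty C := ⟨⟨projC x, hmem⟩⟩
  refine le_antisymm (le_ciInf fun w => ?_) (ciInf_le (f := fun w : C => ‖x - (w : H)‖) ⟨0, fun r ⟨w, hw⟩ => hw ▸ norm_nonneg _⟩ ⟨projC x, hmem⟩)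
  simpa [dist_eq_norm] using (hproj x).2 w w.2

lemma stmt10_lip {ω : ℝ} (hω : 0 < ω) (hCconv : Convex ℝ C) (projC : H → H)
    (hproj : ∀ x, projC x ∈ C ∧ ∀ y ∈ C, dist x (projC x) ≤ dist x y) (x y : H) :
    ‖(ω ^ 2 / (1 + ω * ‖x - projC x‖)) • (x - projC x)
      - (ω ^ 2 / (1 + ω * ‖y - projC y‖)) • (y - projC y)‖ ≤ ω ^ 2 * ‖x - y‖ := by
  set a := x - projC x with ha
  set b := y - projC y with hb
  set s := ‖a‖ with hs
  set t := ‖b‖ with ht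
  have hs0 : 0 ≤ s := norm_nonneg _
  have ht0 : 0 ≤ t := norm_nonneg _
  have h1s : 0 < 1 + ω * s := by nlinarith
  have h1t : 0 < 1 + ω * t := by nlinarith
  set α := 1 / (1 + ω * s) with hα
  set β := 1 / (1 + ω * t) with hβ
  have hα0 : 0 < α := by positivity
  have hβ0 : 0 < β := by positivity
  have hα1 : α ≤ 1 := by rw [hα]; rw [div_le_one h1s]; nlinarith
  have hβ1 : β ≤ 1 := by rw [hβ]; rw [div_le_one h1t]; nlinarith
  -- step 2 : ‖a - b‖ ≤ ‖x - y‖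
  have step2 : ‖a - b‖ ≤ ‖x - y‖ := by
    have varx : ⟪a, projC y - projC x⟫ ≤ 0 := stmt10_var hCconv projC hproj x _ (hproj y).1
    have vary : ⟪b, projC x - projC y⟫ ≤ 0 := stmt10_var hCconv projC hproj y _ (hproj x).1
    set p := projC x - projC y with hp
    have hab : a - b = (x - y) - p := by rw [ha, hb, hp]; abel
    have hup : ‖p‖ ^ 2 ≤ ⟪x - y, p⟫ := by
      have e1 : ⟪a - b, p⟫ ≥ 0 := by
        have : ⟪a, projC y - projC x⟫ = -⟪a, p⟫ := by
          rw [hp, ← inner_neg_right]; congr 1; abel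
        have h2 : ⟪a - b, p⟫ = ⟪a, p⟫ - ⟪b, p⟫ := inner_sub_left _ _ _
        rw [this] at varx
        rw [hp] at vary
        linarith [h2]
      have e2 : ⟪a - b, p⟫ = ⟪x - y, p⟫ - ⟪p, p⟫ := by
        rw [hab, inner_sub_left]
      have e3 : ⟪p, p⟫ = ‖p‖ ^ 2 := real_inner_self_eq_norm_sq _
      linarith [e1, e2 ▸ e1]
    have e4 : ‖a - b‖ ^ 2 = ‖x - y‖ ^ 2 - 2 * ⟪x - y, p⟫ + ‖p‖ ^ 2 := by
      rw [hab, norm_sub_sq_real]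
    have e5 : ‖a - b‖ ^ 2 ≤ ‖x - y‖ ^ 2 := by nlinarith [sq_nonneg ‖p‖]
    nlinarith [norm_nonneg (a - b), norm_nonneg (x - y)]
  -- step 3 : radial contraction
  have hc : ⟪a, b⟫ ≤ s * t := real_inner_le_norm _ _
  have hst : (α * s - β * t) ^ 2 ≤ (s - t) ^ 2 := by
    have hd : α * s - β * t = (s - t) / ((1 + ω * s) * (1 + ω * t)) := by
      rw [hα, hβ]; field_simp; ring
    have hD : 1 ≤ (1 + ω * s) * (1 + ω * t) := by
      nlinarith [mul_nonneg hω.le hs0, mul_nonneg hω.le ht0,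
        mul_nonneg (mul_nonneg hω.le hs0) (mul_nonneg hω.le ht0)]
    rw [hd, div_pow]
    exact div_le_self (sq_nonneg _) (by nlinarith)
  have step3 : ‖α • a - β • b‖ ≤ ‖a - b‖ := by
    have e1 : ‖α • a - β • b‖ ^ 2 = (α * s) ^ 2 - 2 * (α * β * ⟪a, b⟫) + (β * t) ^ 2 := by
      rw [norm_sub_sq_real, real_inner_smul_left, real_inner_smul_right,
        norm_smul, norm_smul, Real.norm_eq_abs, Real.norm_eq_abs,
        abs_of_pos hα0, abs_of_pos hβ0]
      ring
    have e2 : ‖a - b‖ ^ 2 = s ^ 2 - 2 * ⟪a, b⟫ + t ^ 2 := by rw [norm_sub_sq_real]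
    have hαβ : α * β ≤ 1 := by nlinarith
    have hprod : 0 ≤ (1 - α * β) * (s * t - ⟪a, b⟫) := by
      apply mul_nonneg <;> linarith
    have e5 : ‖α • a - β • b‖ ^ 2 ≤ ‖a - b‖ ^ 2 := by
      rw [e1, e2]; nlinarith [hst, hprod]
    nlinarith [norm_nonneg (α • a - β • b), norm_nonneg (a - b), e5]
  have efin : (ω ^ 2 / (1 + ω * s)) • a - (ω ^ 2 / (1 + ω * t)) • b
      = (ω ^ 2) • (α • a - β • b) := by
    have c1 : ω ^ 2 / (1 + ω * s) = ω ^ 2 * α := by rw [hα]; ring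
    have c2 : ω ^ 2 / (1 + ω * t) = ω ^ 2 * β := by rw [hβ]; ring
    rw [c1, c2, mul_smul, mul_smul, ← smul_sub]
  rw [efin, norm_smul, Real.norm_eq_abs, abs_of_pos (by positivity : (0:ℝ) < ω ^ 2)]
  exact mul_le_mul_of_nonneg_left (step3.trans step2) (sq_nonneg ω)
end Aux2

section Aux3
variable {H : Type*} [NormedAddCommGroup H] [InnerProductSpace ℝ H] [CompleteSpace H]
variable {C : Set H}

lemma stmt10_grad {ω : ℝ} (hω : 0 < ω) {h : H → ℝ}
    (hdef : ∀ x, h x = ω * Metric.infDist x C - Real.log (1 + ω * Metric.infDist x C))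
    (hCconv : Convex ℝ C) (projC : H → H)
    (hproj : ∀ x, projC x ∈ C ∧ ∀ y ∈ C, dist x (projC x) ≤ dist x y) (x : H) :
    HasGradientAt h ((ω ^ 2 / (1 + ω * ‖x - projC x‖)) • (x - projC x)) x := by
  set G : H → H := fun z => (ω ^ 2 / (1 + ω * ‖z - projC z‖)) • (z - projC z) with hG
  rw [hasGradientAt_iff_isLittleO]
  have low : ∀ z y : H, h z + ⟪G z, y - z⟫ ≤ h y := fun z y =>
    stmt10_subgrad hω hdef projC hproj (hproj z).1 (stmt10_var hCconv projC hproj z) y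
  have bound : ∀ y : H, ‖h y - h x - ⟪G x, y - x⟫‖ ≤ ω ^ 2 * ‖y - x‖ * ‖y - x‖ := by
    intro y
    have l1 := low x y
    have l2 := low y x
    have l3 : ⟪G y, x - y⟫ = -⟪G y, y - x⟫ := by
      rw [← inner_neg_right]; congr 1; abel
    have l4 : h y - h x - ⟪G x, y - x⟫ ≤ ⟪G y, y - x⟫ - ⟪G x, y - x⟫ := by
      rw [l3] at l2; linarith
    have l5 : ⟪G y, y - x⟫ - ⟪G x, y - x⟫ = ⟪G y - G x, y - x⟫ :=
      (inner_sub_left _ _ _).symm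
    have l6 : ⟪G y - G x, y - x⟫ ≤ ‖G y - G x‖ * ‖y - x‖ := real_inner_le_norm _ _
    have l7 : ‖G y - G x‖ ≤ ω ^ 2 * ‖y - x‖ := stmt10_lip hω hCconv projC hproj y x
    have l8 : 0 ≤ h y - h x - ⟪G x, y - x⟫ := by linarith
    rw [Real.norm_eq_abs, abs_of_nonneg l8]
    nlinarith [norm_nonneg (y - x), norm_nonneg (G y - G x)]
  rw [Asymptotics.isLittleO_iff]
  intro c hc
  have hr : 0 < c / (ω ^ 2 + 1) := by positivity
  filter_upwards [Metric.ball_mem_nhds x hr] with y hy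
  have hy' : ‖y - x‖ < c / (ω ^ 2 + 1) := by rwa [Metric.mem_ball, dist_eq_norm] at hy
  have h2 : ω ^ 2 * ‖y - x‖ ≤ c := by
    have h3 : ‖y - x‖ * (ω ^ 2 + 1) < c := by
      rw [← lt_div_iff₀ (by positivity : (0:ℝ) < ω ^ 2 + 1)]; exact hy'
    nlinarith [norm_nonneg (y - x), sq_nonneg ω]
  calc ‖h y - h x - ⟪G x, y - x⟫‖ ≤ ω ^ 2 * ‖y - x‖ * ‖y - x‖ := bound y
    _ ≤ c * ‖y - x‖ := mul_le_mul_of_nonneg_right h2 (norm_nonneg _)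
    _ = c * ‖(fun x' => x' - x) y‖ := rfl
end Aux3

/-- Let `C` be nonempty closed convex in a real Hilbert space, `ω > 0`,
and `h = ω d_C − ln(1 + ω d_C)`.  Then `h` is convex and Fréchet differentiable with an
`ω²`-Lipschitzian gradient; `∇h(x) = (ω²/(1 + ω d_C x)) • (x − proj_C x)` if `x ∉ C` and
`∇h(x) = 0` if `x ∈ C`; and for every `γ > 0` and `x`,
`prox_{γh} x = proj_C x + ((γω² + 1 − ω d_C x − √(|ω d_C x − γω² − 1|² + 4 ω d_C x))/(2 ω d_C x)) • (proj_C x − x)`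
if `x ∉ C`, while `prox_{γh} x = x` if `x ∈ C`. -/
theorem stmt_10 {H : Type*} [NormedAddCommGroup H] [InnerProductSpace ℝ H] [CompleteSpace H]
    (C : Set H) (hCne : C.Nonempty) (hCclosed : IsClosed C) (hCconv : Convex ℝ C)
    (ω : ℝ) (hω : 0 < ω)
    (h : H → ℝ)
    (hdef : ∀ x, h x = ω * Metric.infDist x C - Real.log (1 + ω * Metric.infDist x C))
    (projC : H → H)
    (hproj : ∀ x, projC x ∈ C ∧ ∀ y ∈ C, dist x (projC x) ≤ dist x y) :
    ConvexOn ℝ Set.univ h ∧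
    (∀ x, DifferentiableAt ℝ h x) ∧
    LipschitzWith (Real.toNNReal (ω ^ 2)) (fun x => gradient h x) ∧
    (∀ x : H,
      (x ∉ C → HasGradientAt h
        ((ω ^ 2 / (1 + ω * Metric.infDist x C)) • (x - projC x)) x) ∧
      (x ∈ C → HasGradientAt h 0 x)) ∧
    (∀ γ : ℝ, 0 < γ → ∀ x p : H,
      -- `p = prox_{γh} x` :
      (∀ y : H, γ * h p + ‖x - p‖ ^ 2 / 2 ≤ γ * h y + ‖x - y‖ ^ 2 / 2) →
      (x ∉ C → p = projC x +
        ((γ * ω ^ 2 + 1 - ω * Metric.infDist x C -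
            Real.sqrt (|ω * Metric.infDist x C - γ * ω ^ 2 - 1| ^ 2
              + 4 * (ω * Metric.infDist x C)))
          / (2 * (ω * Metric.infDist x C))) • (projC x - x)) ∧
      (x ∈ C → p = x)) := by
  set G : H → H := fun z => (ω ^ 2 / (1 + ω * ‖z - projC z‖)) • (z - projC z) with hG
  have dpx : ∀ x : H, Metric.infDist x C = ‖x - projC x‖ := stmt10_infDist_proj projC hproj
  have low : ∀ z y : H, h z + ⟪G z, y - z⟫ ≤ h y := fun z y =>
    stmt10_subgrad hω hdef projC hproj (hproj z).1 (stmt10_var hCconv projC hproj z) y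
  have grad : ∀ x : H, HasGradientAt h (G x) x := stmt10_grad hω hdef hCconv projC hproj
  -- convexity
  have hconv : ConvexOn ℝ Set.univ h := by
    refine ⟨convex_univ, ?_⟩
    intro x _ y _ a b ha hb hab
    set z := a • x + b • y with hz
    have h1 := low z x
    have h2 := low z y
    have hb' : b = 1 - a := by linarith
    have hzero : a • (x - z) + b • (y - z) = (0 : H) := by
      rw [hz, hb']; module
    have hlin : a * ⟪G z, x - z⟫ + b * ⟪G z, y - z⟫
        = ⟪G z, a • (x - z) + b • (y - z)⟫ := by
      rw [inner_add_right, real_inner_smul_right, real_inner_smul_right]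
    rw [hzero, inner_zero_right] at hlin
    have h3 := mul_le_mul_of_nonneg_left h1 ha
    have h4 := mul_le_mul_of_nonneg_left h2 hb
    simp only [smul_eq_mul]
    calc h z = (a + b) * h z := by rw [hab, one_mul]
      _ = a * (h z + ⟪G z, x - z⟫) + b * (h z + ⟪G z, y - z⟫)
          - (a * ⟪G z, x - z⟫ + b * ⟪G z, y - z⟫) := by ring
      _ = a * (h z + ⟪G z, x - z⟫) + b * (h z + ⟪G z, y - z⟫) := by rw [hlin]; ring
      _ ≤ a * h x + b * h y := add_le_add h3 h4
  refine ⟨hconv, fun x => (grad x).differentiableAt, ?_, ?_, ?_⟩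
  · -- Lipschitz gradient
    have geq : ∀ x : H, gradient h x = G x := fun x => (grad x).gradient
    apply LipschitzWith.of_dist_le_mul
    intro x y
    have hcoe : ((Real.toNNReal (ω ^ 2) : NNReal) : ℝ) = ω ^ 2 :=
      Real.coe_toNNReal _ (sq_nonneg ω)
    calc dist (gradient h x) (gradient h y) = ‖G x - G y‖ := by
          rw [dist_eq_norm, geq x, geq y]
      _ ≤ ω ^ 2 * ‖x - y‖ := stmt10_lip hω hCconv projC hproj x y
      _ = (Real.toNNReal (ω ^ 2) : ℝ) * dist x y := by rw [hcoe, dist_eq_norm]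
  · -- gradient formulas
    intro x
    constructor
    · intro _
      rw [dpx x]
      exact grad x
    · intro hx
      have hPx : projC x = x := by
        have h1 : dist x (projC x) ≤ 0 := by simpa using (hproj x).2 x hx
        have h2 : dist x (projC x) = 0 := le_antisymm h1 dist_nonneg
        exact (dist_eq_zero.1 h2).symm
      have := grad x
      rw [hG] at this
      simpa [hPx] using this
  · -- prox formula
    intro γ hγ x p hmin
    constructor
    · -- x ∉ C
      intro hx
      set d := Metric.infDist x C with hddef
      have hd : d = ‖x - projC x‖ := dpx x
      have hdpos : 0 < d := by
        rw [hddef]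
        exact (hCclosed.notMem_iff_infDist_pos hCne).1 hx
      set D := ω * d with hDdef
      have hD : 0 < D := by positivity
      set A := γ * ω ^ 2 with hAdef
      have hA : 0 < A := by positivity
      set B := A + 1 - D with hBdef
      set S := Real.sqrt (B ^ 2 + 4 * D) with hSdef
      have hS2 : S ^ 2 = B ^ 2 + 4 * D := Real.sq_sqrt (by nlinarith)
      have hS0 : 0 ≤ S := Real.sqrt_nonneg _
      have hSgt : B < S := by nlinarith [sq_nonneg (S - B), sq_nonneg (S + B)]
      set lam := (S - B) / (2 * D) with hlamdef
      have hlam : 0 < lam := div_pos (by linarith) (by linarith)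
      have hDne : (2 * D) ≠ 0 := by positivity
      have hquad : D * lam ^ 2 + B * lam - 1 = 0 := by
        have e : 2 * D * lam = S - B := by
          rw [hlamdef, mul_comm]
          exact div_mul_cancel₀ _ hDne
        have e2 : (2 * D * lam + B) ^ 2 = B ^ 2 + 4 * D := by
          rw [e, sub_add_cancel]
          exact hS2
        have rid : 4 * D * (D * lam ^ 2 + B * lam - 1)
            = (2 * D * lam + B) ^ 2 - B ^ 2 - 4 * D := by ring
        have h4 : 4 * D * (D * lam ^ 2 + B * lam - 1) = 0 := by
          rw [rid, e2]; ring
        have h5 : (4 * D) ≠ 0 := by positivity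
        exact (mul_eq_zero.1 h4).resolve_left h5
      set p0 := projC x + lam • (x - projC x) with hp0
      have ep0 : p0 - projC x = lam • (x - projC x) := by rw [hp0]; abel
      have hvarx := stmt10_var hCconv projC hproj x
      have hvarp0 : ∀ c ∈ C, ⟪p0 - projC x, c - projC x⟫ ≤ 0 := by
        intro c hc
        rw [ep0, real_inner_smul_left]
        nlinarith [hvarx c hc, hlam.le]
      have hnp0 : ‖p0 - projC x‖ = lam * d := by
        rw [ep0, norm_smul, Real.norm_eq_abs, abs_of_pos hlam, ← hd]
      set g := (ω ^ 2 / (1 + ω * ‖p0 - projC x‖)) • (p0 - projC x) with hgdef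
      have hsub : ∀ y : H, h p0 + ⟪g, y - p0⟫ ≤ h y := fun y =>
        stmt10_subgrad hω hdef projC hproj (hproj x).1 hvarp0 y
      -- stationarity
      have hpos1 : 0 < 1 + ω * (lam * d) := by nlinarith
      have hcoef : γ * (ω ^ 2 / (1 + ω * (lam * d))) * lam + (lam - 1) = 0 := by
        have expand : D * lam ^ 2 + B * lam - 1
            = (γ * ω ^ 2 * lam + (lam - 1) * (1 + ω * (lam * d))) := by
          rw [hBdef, hAdef, hDdef]; ring
        field_simp
        nlinarith [hquad, expand]
      have s3 : γ • g = x - p0 := by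
        have e1 : γ • g = (γ * (ω ^ 2 / (1 + ω * (lam * d))) * lam) • (x - projC x) := by
          rw [hgdef, hnp0, ep0, smul_smul, smul_smul, mul_assoc]
        have e2 : x - p0 = (1 - lam) • (x - projC x) := by
          rw [hp0]; module
        rw [e1, e2]
        congr 1
        linarith [hcoef]
      -- p0 is a minimizer
      have hminp0 : ∀ y : H, γ * h p0 + ‖x - p0‖ ^ 2 / 2 ≤ γ * h y + ‖x - y‖ ^ 2 / 2 := by
        intro y
        have s1 := hsub y
        have s2 : ‖x - y‖ ^ 2 = ‖x - p0‖ ^ 2 - 2 * ⟪x - p0, y - p0⟫ + ‖y - p0‖ ^ 2 := by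
          have e : x - y = (x - p0) - (y - p0) := by abel
          rw [e, norm_sub_sq_real]
        have s4 : γ * ⟪g, y - p0⟫ = ⟪x - p0, y - p0⟫ := by
          rw [← s3]
          exact (real_inner_smul_left _ _ _).symm
        nlinarith [mul_le_mul_of_nonneg_left s1 hγ.le, sq_nonneg ‖y - p0‖, s2, s4]
      -- uniqueness via midpoint
      have hFp : γ * h p + ‖x - p‖ ^ 2 / 2 = γ * h p0 + ‖x - p0‖ ^ 2 / 2 :=
        le_antisymm (hmin p0) (hminp0 p)
      set m := (2⁻¹ : ℝ) • p + (2⁻¹ : ℝ) • p0 with hm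
      have hcm : h m ≤ (2⁻¹ : ℝ) * h p + (2⁻¹ : ℝ) * h p0 := by
        have h0 := hconv.2 (Set.mem_univ p) (Set.mem_univ p0)
          (by norm_num : (0:ℝ) ≤ 2⁻¹) (by norm_num : (0:ℝ) ≤ 2⁻¹) (by norm_num)
        simp only [smul_eq_mul] at h0
        rw [← hm] at h0
        exact h0
      have hpar : ‖x - m‖ ^ 2
          = (‖x - p‖ ^ 2 + ‖x - p0‖ ^ 2) / 2 - ‖p - p0‖ ^ 2 / 4 := by
        have hm1 : x - m = (2⁻¹ : ℝ) • ((x - p) + (x - p0)) := by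
          rw [hm]; module
        have hm2 : p - p0 = (x - p0) - (x - p) := by abel
        have e1 : ‖x - m‖ ^ 2 = (1 / 4) * ‖(x - p) + (x - p0)‖ ^ 2 := by
          rw [hm1, norm_smul, Real.norm_eq_abs,
            abs_of_pos (by norm_num : (0:ℝ) < 2⁻¹)]
          ring
        have e2 : ‖(x - p) + (x - p0)‖ ^ 2
            = ‖x - p‖ ^ 2 + 2 * ⟪x - p, x - p0⟫ + ‖x - p0‖ ^ 2 := norm_add_sq_real _ _
        have e3 : ‖p - p0‖ ^ 2 = ‖x - p0‖ ^ 2 - 2 * ⟪x - p0, x - p⟫ + ‖x - p‖ ^ 2 := by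
          rw [hm2, norm_sub_sq_real]
        have e4 : ⟪x - p0, x - p⟫ = ⟪x - p, x - p0⟫ := real_inner_comm _ _
        rw [e1, e2]; rw [e4] at e3; linarith
      have hmid := hmin m
      have hpp0 : ‖p - p0‖ ^ 2 ≤ 0 := by nlinarith [hmid, hFp, hcm, hpar, hγ]
      have hppe : p = p0 := by
        have : ‖p - p0‖ = 0 := le_antisymm (by nlinarith [norm_nonneg (p - p0)]) (norm_nonneg _)
        have := norm_eq_zero.1 this
        exact sub_eq_zero.1 this
      -- rewrite goal
      rw [hppe, hp0]
      have habs : |D - A - 1| ^ 2 = B ^ 2 := by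
        rw [sq_abs, hBdef]; ring
      rw [habs, ← hSdef, ← neg_sub x (projC x), smul_neg, ← neg_smul]
      congr 1
      rw [hlamdef]
      ring
    · -- x ∈ C
      intro hx
      have hd0 : Metric.infDist x C = 0 := Metric.infDist_zero_of_mem hx
      have hhx : h x = 0 := by rw [hdef x, hd0]; simp
      have hnn : 0 ≤ h p := by
        rw [hdef p]
        have hdp : 0 ≤ Metric.infDist p C := Metric.infDist_nonneg
        have : Real.log (1 + ω * Metric.infDist p C) ≤ (1 + ω * Metric.infDist p C) - 1 :=
          Real.log_le_sub_one_of_pos (by nlinarith)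
        linarith
      have hm := hmin x
      rw [hhx] at hm
      simp only [sub_self, norm_zero] at hm
      have h2 : ‖x - p‖ ^ 2 ≤ 0 := by nlinarith [hm, hγ, hnn]
      have : ‖x - p‖ = 0 := le_antisymm (by nlinarith [norm_nonneg (x - p)]) (norm_nonneg _)
      have := norm_eq_zero.1 this
      exact (sub_eq_zero.1 this).symm
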